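/- There exists a connected uniform graph Γ that is not Gromov hyperbolic (its hyperbolicity constant δ(Γ) is infinite) and satisfies h(Γ) > 0. -/

import Mathlib

open scoped ENNReal

namespace TreePaper

variable {V : Type*}

/-- The (outer) vertex boundary `∂A = {w : d(w,A) = 1}` of a set of vertices. -/
def vboundary (G : SimpleGraph V) (A : Set V) : Set V :=
  {w | w ∉ A ∧ ∃ a ∈ A, G.Adj w a}

/-- The ratio `|∂A| / |A|`, valued in `ℝ≥0∞`. -/
noncomputable def eratio (G : SimpleGraph V) (A : Finset V) : ℝ≥0∞ :=
  ((vboundary G (A : Set V)).encard : ℝ≥0∞) / (A.card : ℝ≥0∞)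

/-- The Cheeger isoperimetric constant `h(Γ) = inf_A |∂A|/|A|`. -/
noncomputable def cheeger (G : SimpleGraph V) : ℝ≥0∞ :=
  ⨅ (A : Finset V) (_ : A.Nonempty), eratio G A

/-- The Gromov product `(x|y)_o` with respect to the graph metric. -/
noncomputable def gp (G : SimpleGraph V) (o x y : V) : ℝ :=
  ((G.dist x o : ℝ) + (G.dist y o : ℝ) - (G.dist x y : ℝ)) / 2

section Aux

open SimpleGraph

/-- Tree adjacency on binary strings: parent/child relation. -/
def tAdj (a b : List Bool) : Prop := (∃ x, a = x :: b) ∨ (∃ x, b = x :: a)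

/-- The product of the binary tree with ℤ. -/
def PG : SimpleGraph (List Bool × ℤ) where
  Adj p q := (p.1 = q.1 ∧ (p.2 = q.2 + 1 ∨ q.2 = p.2 + 1)) ∨ (p.2 = q.2 ∧ tAdj p.1 q.1)
  symm := by
    constructor
    rintro p q (⟨h1, h2 | h2⟩ | ⟨h1, h2 | h2⟩)
    · exact Or.inl ⟨h1.symm, Or.inr h2⟩
    · exact Or.inl ⟨h1.symm, Or.inl h2⟩
    · exact Or.inr ⟨h1.symm, Or.inr h2⟩
    · exact Or.inr ⟨h1.symm, Or.inl h2⟩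
  loopless := by
    constructor
    rintro p (⟨h1, h2 | h2⟩ | ⟨h1, ⟨x, hx⟩ | ⟨x, hx⟩⟩)
    · omega
    · omega
    · simpa using congrArg List.length hx
    · simpa using congrArg List.length hx

lemma zAdj (a : List Bool) (m : ℤ) : PG.Adj (a, m + 1) (a, m) := Or.inl ⟨rfl, Or.inl rfl⟩

lemma treeAdj' (a : List Bool) (x : Bool) (m : ℤ) : PG.Adj (x :: a, m) (a, m) :=
  Or.inr ⟨rfl, Or.inl ⟨x, rfl⟩⟩

lemma PG_connected : PG.Connected := by
  have h0 : ∀ a : List Bool, PG.Reachable (a, (0:ℤ)) (([]:List Bool), (0:ℤ)) := by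
    intro a
    induction a with
    | nil => exact Reachable.refl _
    | cons x t ih => exact (Adj.reachable (treeAdj' t x 0)).trans ih
  have hz : ∀ (a : List Bool) (m : ℤ), PG.Reachable (a, m) (a, (0:ℤ)) := by
    intro a m
    induction m using Int.induction_on with
    | zero => exact Reachable.refl _
    | pred n ih =>
        have h : PG.Adj (a, (-(n+1) : ℤ)) (a, (-n : ℤ)) := Or.inl ⟨rfl, Or.inr (by ring)⟩
        have e : (-(n:ℤ)-1) = -(n+1) := by ring
        rw [e]; exact h.reachable.trans ih
    | succ n ih =>
        have h : PG.Adj (a, ((n+1) : ℤ)) (a, (n : ℤ)) := Or.inl ⟨rfl, Or.inl (by ring)⟩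
        exact h.reachable.trans ih
  rw [connected_iff]
  refine ⟨fun u v => ?_, ⟨(([]:List Bool), (0:ℤ))⟩⟩
  exact ((hz u.1 u.2).trans (h0 u.1)).trans (((hz v.1 v.2).trans (h0 v.1)).symm)


lemma PG_uniform (p : List Bool × ℤ) : (PG.neighborSet p).encard ≤ (5 : ℕ) := by
  have hsub : PG.neighborSet p ⊆
      ({(p.1, p.2 + 1), (p.1, p.2 - 1), (false :: p.1, p.2), (true :: p.1, p.2),
        (p.1.tail, p.2)} : Set (List Bool × ℤ)) := by
    rintro q (⟨h1, h2 | h2⟩ | ⟨h1, ⟨x, hx⟩ | ⟨x, hx⟩⟩)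
    · refine Or.inr (Or.inl ?_)
      obtain ⟨a, b⟩ := q; obtain ⟨c, d⟩ := p
      simp only [Prod.mk.injEq]
      simp only at h1 h2
      exact ⟨h1.symm, by omega⟩
    · refine Or.inl ?_
      obtain ⟨a, b⟩ := q; obtain ⟨c, d⟩ := p
      simp only [Prod.mk.injEq]
      simp only at h1 h2
      exact ⟨h1.symm, by omega⟩
    · -- p.1 = x :: q.1, so q.1 = p.1.tail
      refine Or.inr (Or.inr (Or.inr (Or.inr ?_)))
      obtain ⟨a, b⟩ := q; obtain ⟨c, d⟩ := p
      simp only at h1 hx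
      subst hx
      simp only [Set.mem_singleton_iff, Prod.mk.injEq, List.tail_cons]
      simp [h1]
    · -- q.1 = x :: p.1
      obtain ⟨a, b⟩ := q; obtain ⟨c, d⟩ := p
      simp only at h1 hx
      rcases x with _ | _
      · refine Or.inr (Or.inr (Or.inl ?_))
        simp only [Prod.mk.injEq]
        exact ⟨hx, h1.symm⟩
      · refine Or.inr (Or.inr (Or.inr (Or.inl ?_)))
        simp only [Prod.mk.injEq]
        exact ⟨hx, h1.symm⟩
  refine le_trans (Set.encard_le_encard hsub) ?_
  refine le_trans (Set.encard_insert_le _ _) ?_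
  refine le_trans (add_le_add_left (Set.encard_insert_le _ _) 1) ?_
  refine le_trans (add_le_add_left (add_le_add_left (Set.encard_insert_le _ _) 1) 1) ?_
  refine le_trans (add_le_add_left (add_le_add_left (add_le_add_left
    (Set.encard_insert_le _ _) 1) 1) 1) ?_
  have : ({(p.1.tail, p.2)} : Set (List Bool × ℤ)).encard = 1 := Set.encard_singleton _
  rw [this]
  decide

/-- Lipschitz functions bound walk lengths below. -/
lemma lip_walk (f : List Bool × ℤ → ℤ)
    (hf : ∀ u v, PG.Adj u v → |f u - f v| ≤ 1) :
    ∀ {u v : List Bool × ℤ} (w : PG.Walk u v), |f u - f v| ≤ (w.length : ℤ) := by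
  intro u v w
  induction w with
  | nil => simp
  | @cons a b c h p ih =>
    have h1 : |f a - f b| ≤ 1 := hf _ _ h
    have h2 : |f a - f c| ≤ |f a - f b| + |f b - f c| := abs_sub_le _ _ _
    rw [SimpleGraph.Walk.length_cons]
    push_cast
    linarith

lemma dist_lower (f : List Bool × ℤ → ℤ)
    (hf : ∀ u v, PG.Adj u v → |f u - f v| ≤ 1) (u v : List Bool × ℤ) :
    |f u - f v| ≤ (PG.dist u v : ℤ) := by
  obtain ⟨w, hw⟩ := (PG_connected.preconnected u v).exists_walk_length_eq_dist
  rw [← hw]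
  exact lip_walk f hf w


lemma hf_lin (α β : ℤ) (hα : |α| ≤ 1) (hβ : |β| ≤ 1) :
    ∀ u v : List Bool × ℤ, PG.Adj u v →
      |(α * u.1.length + β * u.2) - (α * v.1.length + β * v.2)| ≤ 1 := by
  rintro ⟨a, b⟩ ⟨c, d⟩ (⟨h1, h2 | h2⟩ | ⟨h1, ⟨x, hx⟩ | ⟨x, hx⟩⟩) <;> dsimp only at *
  · rw [h1]
    have : α * (c.length : ℤ) + β * b - (α * c.length + β * d) = β * (b - d) := by ring
    rw [this, h2]
    simpa using hβ
  · rw [h1]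
    have : α * (c.length : ℤ) + β * b - (α * c.length + β * d) = β * (b - d) := by ring
    rw [this, h2]
    have : (b : ℤ) - (b + 1) = -1 := by ring
    rw [this]
    simpa using hβ
  · have hl : (a.length : ℤ) = c.length + 1 := by rw [hx]; push_cast [List.length_cons]; ring
    have : α * (a.length : ℤ) + β * b - (α * c.length + β * d) = α := by rw [hl, h1]; ring
    rw [this]; exact hα
  · have hl : (c.length : ℤ) = a.length + 1 := by rw [hx]; push_cast [List.length_cons]; ring
    have : α * (a.length : ℤ) + β * b - (α * c.length + β * d) = -α := by rw [hl, h1]; ring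
    rw [this]; simpa using hα

lemma adj_dist_le {u v : List Bool × ℤ} (h : PG.Adj u v) : PG.dist u v ≤ 1 :=
  (SimpleGraph.dist_eq_one_iff_adj.mpr h).le

lemma dist_tree_le (j : ℕ) (m : ℤ) :
    PG.dist (List.replicate j false, m) (([] : List Bool), m) ≤ j := by
  induction j with
  | zero => simp
  | succ j ih =>
    have hadj : PG.Adj (List.replicate (j + 1) false, m) (List.replicate j false, m) := by
      rw [List.replicate_succ]; exact treeAdj' _ false m
    calc PG.dist (List.replicate (j + 1) false, m) (([] : List Bool), m)
        ≤ PG.dist (List.replicate (j + 1) false, m) (List.replicate j false, m)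
          + PG.dist (List.replicate j false, m) (([] : List Bool), m) :=
          PG_connected.dist_triangle
      _ ≤ 1 + j := add_le_add (adj_dist_le hadj) ih
      _ = j + 1 := by omega

lemma dist_int_le (a : List Bool) (k : ℕ) :
    PG.dist (a, (k : ℤ)) (a, 0) ≤ k := by
  induction k with
  | zero => simp
  | succ k ih =>
    have hadj : PG.Adj (a, ((k : ℤ) + 1)) (a, (k : ℤ)) := zAdj a k
    calc PG.dist (a, ((k + 1 : ℕ) : ℤ)) (a, 0)
        ≤ PG.dist (a, ((k + 1 : ℕ) : ℤ)) (a, (k : ℤ)) + PG.dist (a, (k : ℤ)) (a, 0) :=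
          PG_connected.dist_triangle
      _ ≤ 1 + k := add_le_add (by push_cast; exact adj_dist_le hadj) ih
      _ = k + 1 := by omega

lemma dist_xo (n : ℕ) :
    PG.dist (List.replicate n false, (0 : ℤ)) (([] : List Bool), (0 : ℤ)) = n := by
  refine le_antisymm (dist_tree_le n 0) ?_
  have := dist_lower (fun p => 1 * (p.1.length : ℤ) + 0 * p.2)
    (hf_lin 1 0 (by norm_num) (by norm_num))
    (List.replicate n false, (0 : ℤ)) (([] : List Bool), (0 : ℤ))
  simp [List.length_replicate] at this
  exact_mod_cast this

lemma dist_yo (n : ℕ) :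
    PG.dist (([] : List Bool), (n : ℤ)) (([] : List Bool), (0 : ℤ)) = n := by
  refine le_antisymm (dist_int_le [] n) ?_
  have := dist_lower (fun p => 0 * (p.1.length : ℤ) + 1 * p.2)
    (hf_lin 0 1 (by norm_num) (by norm_num))
    (([] : List Bool), (n : ℤ)) (([] : List Bool), (0 : ℤ))
  simp at this
  exact_mod_cast this

lemma dist_xz (n : ℕ) :
    PG.dist (List.replicate n false, (0 : ℤ)) (List.replicate n false, (n : ℤ)) = n := by
  rw [SimpleGraph.dist_comm]
  refine le_antisymm (dist_int_le _ n) ?_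
  have := dist_lower (fun p => 0 * (p.1.length : ℤ) + 1 * p.2)
    (hf_lin 0 1 (by norm_num) (by norm_num))
    (List.replicate n false, (n : ℤ)) (List.replicate n false, (0 : ℤ))
  simp at this
  exact_mod_cast this

lemma dist_zy (n : ℕ) :
    PG.dist (List.replicate n false, (n : ℤ)) (([] : List Bool), (n : ℤ)) = n := by
  refine le_antisymm (dist_tree_le n n) ?_
  have := dist_lower (fun p => 1 * (p.1.length : ℤ) + 0 * p.2)
    (hf_lin 1 0 (by norm_num) (by norm_num))
    (List.replicate n false, (n : ℤ)) (([] : List Bool), (n : ℤ))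
  simp [List.length_replicate] at this
  exact_mod_cast this

lemma dist_zo (n : ℕ) :
    PG.dist (List.replicate n false, (n : ℤ)) (([] : List Bool), (0 : ℤ)) = 2 * n := by
  refine le_antisymm ?_ ?_
  · calc PG.dist (List.replicate n false, (n : ℤ)) (([] : List Bool), (0 : ℤ))
        ≤ PG.dist (List.replicate n false, (n : ℤ)) (List.replicate n false, (0 : ℤ))
          + PG.dist (List.replicate n false, (0 : ℤ)) (([] : List Bool), (0 : ℤ)) :=
          PG_connected.dist_triangle
      _ ≤ n + n := add_le_add (dist_int_le _ n) (dist_tree_le n 0)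
      _ = 2 * n := by omega
  · have := dist_lower (fun p => 1 * (p.1.length : ℤ) + 1 * p.2)
      (hf_lin 1 1 (by norm_num) (by norm_num))
      (List.replicate n false, (n : ℤ)) (([] : List Bool), (0 : ℤ))
    simp [List.length_replicate] at this
    rw [abs_of_nonneg (by positivity)] at this
    omega

lemma dist_xy (n : ℕ) :
    PG.dist (List.replicate n false, (0 : ℤ)) (([] : List Bool), (n : ℤ)) = 2 * n := by
  refine le_antisymm ?_ ?_
  · calc PG.dist (List.replicate n false, (0 : ℤ)) (([] : List Bool), (n : ℤ))
        ≤ PG.dist (List.replicate n false, (0 : ℤ)) (([] : List Bool), (0 : ℤ))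
          + PG.dist (([] : List Bool), (0 : ℤ)) (([] : List Bool), (n : ℤ)) :=
          PG_connected.dist_triangle
      _ ≤ n + n := by
          refine add_le_add (dist_tree_le n 0) ?_
          rw [SimpleGraph.dist_comm]; exact dist_int_le [] n
      _ = 2 * n := by omega
  · have := dist_lower (fun p => 1 * (p.1.length : ℤ) + (-1) * p.2)
      (hf_lin 1 (-1) (by norm_num) (by norm_num))
      (List.replicate n false, (0 : ℤ)) (([] : List Bool), (n : ℤ))
    simp [List.length_replicate] at this
    rw [abs_of_nonneg (by positivity)] at this
    omega


lemma boundary_lower (A : Finset (List Bool × ℤ)) :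
    (A.card : ℕ∞) ≤ (vboundary PG (↑A : Set (List Bool × ℤ))).encard := by
  classical
  set φ : (List Bool × ℤ) × Bool → List Bool × ℤ := fun q => (q.2 :: q.1.1, q.1.2) with hφ
  have hinj : Function.Injective φ := by
    rintro ⟨⟨a, b⟩, x⟩ ⟨⟨c, d⟩, y⟩ h
    simp only [hφ, Prod.mk.injEq, List.cons.injEq] at h
    obtain ⟨⟨h1, h2⟩, h3⟩ := h
    simp_all
  set C := (A ×ˢ (Finset.univ : Finset Bool)).image φ with hC
  have hCcard : C.card = 2 * A.card := by
    rw [hC, Finset.card_image_of_injective _ hinj, Finset.card_product]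
    simp [mul_comm]
  have hsub : (↑(C \ A) : Set (List Bool × ℤ)) ⊆ vboundary PG (↑A : Set (List Bool × ℤ)) := by
    intro q hq
    simp only [Finset.coe_sdiff, Set.mem_diff, Finset.mem_coe] at hq
    obtain ⟨hqC, hqA⟩ := hq
    rw [hC, Finset.mem_image] at hqC
    obtain ⟨⟨p, x⟩, hp, rfl⟩ := hqC
    rw [Finset.mem_product] at hp
    refine ⟨hqA, p, hp.1, ?_⟩
    exact Or.inr ⟨rfl, Or.inl ⟨x, rfl⟩⟩
  have hcard : A.card ≤ (C \ A).card := by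
    have := Finset.le_card_sdiff A C
    omega
  calc (A.card : ℕ∞) ≤ ((C \ A).card : ℕ∞) := by exact_mod_cast hcard
    _ = (↑(C \ A) : Set (List Bool × ℤ)).encard := (Set.encard_coe_eq_coe_finsetCard _).symm
    _ ≤ _ := Set.encard_le_encard hsub

lemma cheeger_ge_one : (1 : ℝ≥0∞) ≤ cheeger PG := by
  refine le_iInf fun A => le_iInf fun hA => ?_
  rw [eratio, ENNReal.le_div_iff_mul_le (Or.inl ?h0) (Or.inl ?ht), one_mul]
  case h0 => exact_mod_cast hA.card_pos.ne'
  case ht => exact ENNReal.natCast_ne_top _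
  exact_mod_cast boundary_lower A



end Aux

/-- There exists a connected uniform graph `Γ` that is not Gromov
hyperbolic (its hyperbolicity constant is infinite) and satisfies `h(Γ) > 0`. -/
theorem exists_nonhyperbolic_uniform_graph_with_cheeger_pos :
    ∃ (V : Type) (G : SimpleGraph V), G.Connected ∧
      (∃ μ : ℕ, ∀ x : V, (G.neighborSet x).encard ≤ μ) ∧
      (∀ δ : ℝ, ∃ o x y z : V, δ < min (gp G o x z) (gp G o z y) - gp G o x y) ∧
      0 < cheeger G := by
  refine ⟨List Bool × ℤ, PG, PG_connected, ⟨5, PG_uniform⟩, ?_, ?_⟩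
  · intro δ
    obtain ⟨n, hn⟩ := exists_nat_gt δ
    refine ⟨(([] : List Bool), (0 : ℤ)), (List.replicate n false, (0 : ℤ)),
      (([] : List Bool), (n : ℤ)), (List.replicate n false, (n : ℤ)), ?_⟩
    have e1 : gp PG (([] : List Bool), (0 : ℤ)) (List.replicate n false, (0 : ℤ))
        (List.replicate n false, (n : ℤ)) = n := by
      rw [gp, dist_xo n, dist_zo n, dist_xz n]
      push_cast; ring
    have e2 : gp PG (([] : List Bool), (0 : ℤ)) (List.replicate n false, (n : ℤ))
        (([] : List Bool), (n : ℤ)) = n := by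
      rw [gp, dist_zo n, dist_yo n, dist_zy n]
      push_cast; ring
    have e3 : gp PG (([] : List Bool), (0 : ℤ)) (List.replicate n false, (0 : ℤ))
        (([] : List Bool), (n : ℤ)) = 0 := by
      rw [gp, dist_xo n, dist_yo n, dist_xy n]
      push_cast; ring
    rw [e1, e2, e3, min_self]
    simpa using hn
  · exact lt_of_lt_of_le zero_lt_one cheeger_ge_one

end TreePaper
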